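/- Let G be a finitely generated group and let K be a normal subgroup of a free group F_n with surjection F_n ↠ G having kernel K. Then there exists a finite subset {r₁,…,r_k} ⊆ K such that a homomorphism ρ : F_n → SL(2,ℂ) factors through G if and only if ρ(rⱼ) = I₂ for all j ≤ k. -/
import Mathlib

open MvPolynomial Matrix

noncomputable section SL2Noeth

abbrev SLR (n : ℕ) := MvPolynomial (Fin n × Fin 2 × Fin 2) ℂ

def genMat (n : ℕ) (i : Fin n) : Matrix (Fin 2) (Fin 2) (SLR n) := fun a b => X (i, a, b)

def SLJ (n : ℕ) : Ideal (SLR n) := Ideal.span (Set.range fun i : Fin n => (genMat n i).det - 1)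

abbrev SLA (n : ℕ) := SLR n ⧸ SLJ n

instance (n : ℕ) : IsNoetherianRing (SLA n) :=
  isNoetherianRing_of_surjective _ _ (Ideal.Quotient.mk (SLJ n)) Ideal.Quotient.mk_surjective

def genSL (n : ℕ) (i : Fin n) : Matrix.SpecialLinearGroup (Fin 2) (SLA n) :=
  ⟨(genMat n i).map (Ideal.Quotient.mk (SLJ n)), by
    rw [← RingHom.mapMatrix_apply, ← RingHom.map_det, show (1 : SLA n) = Ideal.Quotient.mk (SLJ n) 1 from (_root_.map_one _).symm,
      Ideal.Quotient.mk_eq_mk_iff_sub_mem]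
    exact Ideal.subset_span ⟨i, rfl⟩⟩

def Phi (n : ℕ) : FreeGroup (Fin n) →* Matrix.SpecialLinearGroup (Fin 2) (SLA n) :=
  FreeGroup.lift (genSL n)

def ESet (n : ℕ) (w : FreeGroup (Fin n)) : Set (SLA n) :=
  Set.range fun p : Fin 2 × Fin 2 =>
    ((Phi n w : Matrix (Fin 2) (Fin 2) (SLA n)) p.1 p.2
      - (1 : Matrix (Fin 2) (Fin 2) (SLA n)) p.1 p.2)

variable {n : ℕ} (ρ : FreeGroup (Fin n) →* Matrix.SpecialLinearGroup (Fin 2) ℂ)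

def evR : SLR n →+* ℂ :=
  MvPolynomial.eval fun x => (ρ (FreeGroup.of x.1) : Matrix (Fin 2) (Fin 2) ℂ) x.2.1 x.2.2

lemma SLJ_le_ker : SLJ n ≤ RingHom.ker (evR ρ) := by
  rw [SLJ, Ideal.span_le]
  rintro _ ⟨i, rfl⟩
  have h1 : ((genMat n i).map (evR ρ)).det = 1 := by
    have : (genMat n i).map (evR ρ) = (ρ (FreeGroup.of i) : Matrix (Fin 2) (Fin 2) ℂ) := by
      ext a b
      simp [genMat, evR]
    rw [this]
    exact (ρ (FreeGroup.of i)).2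
  rw [← RingHom.mapMatrix_apply] at h1
  simp only [SetLike.mem_coe, RingHom.mem_ker, map_sub, RingHom.map_det, h1, _root_.map_one,
    sub_self]

def evA : SLA n →+* ℂ := Ideal.Quotient.lift (SLJ n) (evR ρ) (SLJ_le_ker ρ)

lemma map_Phi_eq : (Matrix.SpecialLinearGroup.map (evA ρ)).comp (Phi n) = ρ := by
  apply FreeGroup.ext_hom
  intro i
  ext a b
  simp only [MonoidHom.comp_apply, Phi, FreeGroup.lift_apply_of]
  show (evA ρ) ((genSL n i : Matrix (Fin 2) (Fin 2) (SLA n)) a b)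
      = (ρ (FreeGroup.of i) : Matrix (Fin 2) (Fin 2) ℂ) a b
  simp [genSL, genMat, evA, evR]

lemma rho_eq_one_iff (w : FreeGroup (Fin n)) :
    ρ w = 1 ↔ ∀ x ∈ ESet n w, evA ρ x = 0 := by
  have hmap := map_Phi_eq ρ
  constructor
  · intro h x hx
    obtain ⟨p, rfl⟩ := hx
    have : (Matrix.SpecialLinearGroup.map (evA ρ)) (Phi n w) = 1 := by
      rw [← MonoidHom.comp_apply, hmap, h]
    have h2 : ∀ a b, (evA ρ) ((Phi n w : Matrix (Fin 2) (Fin 2) (SLA n)) a b)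
        = (1 : Matrix (Fin 2) (Fin 2) ℂ) a b := by
      intro a b
      have := congrArg (fun m : Matrix.SpecialLinearGroup (Fin 2) ℂ =>
        (m : Matrix (Fin 2) (Fin 2) ℂ) a b) this
      simpa using this
    rw [map_sub, h2 p.1 p.2]
    by_cases hab : p.1 = p.2 <;> simp [Matrix.one_apply, hab]
  · intro h
    rw [← hmap]
    ext a b
    have hx := h _ ⟨(a, b), rfl⟩
    rw [map_sub, sub_eq_zero] at hx
    show (evA ρ) ((Phi n w : Matrix (Fin 2) (Fin 2) (SLA n)) a b)
        = (1 : Matrix (Fin 2) (Fin 2) ℂ) a b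
    rw [hx]
    by_cases hab : a = b <;> simp [Matrix.one_apply, hab]

end SL2Noeth

/-- Equational Noetherianity of `SL(2,ℂ)`: if `G` is the quotient of a free group
`F_n` by the normal subgroup `K = ker π`, then there are finitely many elements
`r₁, …, r_k ∈ K` such that a representation `ρ : F_n → SL(2,ℂ)` factors through `G`
iff `ρ(rⱼ) = I` for all `j`. -/
theorem stmt_15 {G : Type*} [Group G] (n : ℕ)
    (π : FreeGroup (Fin n) →* G) (hπ : Function.Surjective π) :
    ∃ s : Finset (FreeGroup (Fin n)), (↑s : Set (FreeGroup (Fin n))) ⊆ (π.ker : Set (FreeGroup (Fin n))) ∧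
      ∀ ρ : FreeGroup (Fin n) →* Matrix.SpecialLinearGroup (Fin 2) ℂ,
        (∃ ρ' : G →* Matrix.SpecialLinearGroup (Fin 2) ℂ, ρ'.comp π = ρ) ↔
          ∀ r ∈ s, ρ r = 1 := by
  classical
  -- the big set of equations
  set U : Set (SLA n) := ⋃ r ∈ (π.ker : Set (FreeGroup (Fin n))), ESet n r with hU
  set I : Ideal (SLA n) := Ideal.span U with hI
  -- Noetherianity: I is finitely generated
  obtain ⟨T, hT⟩ : I.FG := IsNoetherian.noetherian I
  -- each generator lies in the span of a finite subset of U
  have hmem : ∀ t ∈ T, ∃ u : Finset (SLA n), ↑u ⊆ U ∧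
      t ∈ Ideal.span (↑u : Set (SLA n)) := by
    intro t ht
    have : t ∈ Ideal.span U := by rw [← hI, ← hT]; exact Ideal.subset_span ht
    exact Submodule.mem_span_finite_of_mem_span this
  choose u hu hspan using hmem
  set V : Finset (SLA n) := T.attach.biUnion (fun t => u t.1 t.2) with hV
  have hVU : (↑V : Set (SLA n)) ⊆ U := by
    intro x hx
    simp only [hV, Finset.coe_biUnion, Set.mem_iUnion] at hx
    obtain ⟨t, _, hx⟩ := hx
    exact hu t.1 t.2 hx
  -- every element of V lies in some ESet r with r ∈ ker π
  have hch : ∀ x ∈ (↑V : Set (SLA n)), ∃ r, r ∈ π.ker ∧ x ∈ ESet n r := by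
    intro x hx
    obtain ⟨S, ⟨r, rfl⟩, hS⟩ := hVU hx
    simp only [Set.mem_iUnion] at hS
    obtain ⟨hr, hx'⟩ := hS
    exact ⟨r, hr, hx'⟩
  choose! f hf1 hf2 using hch
  refine ⟨V.image f, ?_, ?_⟩
  · intro r hr
    simp only [Finset.coe_image, Set.mem_image, Finset.mem_coe] at hr
    obtain ⟨x, hx, rfl⟩ := hr
    exact hf1 x hx
  · intro ρ
    constructor
    · rintro ⟨ρ', rfl⟩ r hr
      have hrk : r ∈ π.ker := by
        simp only [Finset.mem_image] at hr
        obtain ⟨x, hx, rfl⟩ := hr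
        exact hf1 x hx
      simp only [MonoidHom.comp_apply]
      rw [show π r = 1 from hrk, _root_.map_one]
    · intro h
      -- the evaluation kills V, hence I, hence all ESet r for r ∈ ker π
      have hV0 : ∀ x ∈ (↑V : Set (SLA n)), evA ρ x = 0 := by
        intro x hx
        have hx2 : x ∈ ESet n (f x) := hf2 x hx
        have : ρ (f x) = 1 := h (f x) (Finset.mem_image_of_mem f hx)
        exact (rho_eq_one_iff ρ (f x)).mp this x hx2
      have hI0 : ∀ x ∈ I, evA ρ x = 0 := by
        intro x hx
        have hle : I ≤ RingHom.ker (evA ρ) := by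
          rw [← hT, Ideal.span_le]
          intro t ht
          have := hspan t ht
          have hle2 : Ideal.span (↑(u t ht) : Set (SLA n)) ≤ RingHom.ker (evA ρ) := by
            rw [Ideal.span_le]
            intro y hy
            exact hV0 y (by
              simp only [hV, Finset.coe_biUnion, Set.mem_iUnion]
              exact ⟨⟨t, ht⟩, Finset.mem_attach _ _, hy⟩)
          exact hle2 this
        exact hle hx
      -- hence ρ kills all of ker π
      have hker : π.ker ≤ ρ.ker := by
        intro r hr
        rw [MonoidHom.mem_ker, rho_eq_one_iff]
        intro x hx
        exact hI0 x (Ideal.subset_span (Set.mem_biUnion hr hx))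
      -- lift along the surjection
      obtain ⟨σ, hσ⟩ := hπ.hasRightInverse
      exact ⟨π.liftOfRightInverse σ hσ ⟨ρ, hker⟩, π.liftOfRightInverse_comp σ hσ ⟨ρ, hker⟩⟩
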